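/- Let C be a strict globularily generated double category. Then the transversal category τC of C equals the colimit (increasing union) of its horizontal filtration: τC = colim_k H_k^C, where each H_k^C is a category whose objects are the vertical morphisms of C and whose composition is horizontal composition. -/
import Mathlib


universe u

/-! Basic raw categories and functors. -/


structure CatData : Type (u + 1) where
  Obj : Type u
  Hom : Obj → Obj → Type u
  id : (a : Obj) → Hom a a
  comp : {a b c : Obj} → Hom a b → Hom b c → Hom a c
  id_comp : ∀ {a b : Obj} (f : Hom a b), comp (id a) f = f
  comp_id : ∀ {a b : Obj} (f : Hom a b), comp f (id b) = f
  assoc : ∀ {a b c d : Obj} (f : Hom a b) (g : Hom b c) (h : Hom c d),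
    comp (comp f g) h = comp f (comp g h)

namespace CatData

/-- The canonical morphism associated to an equality of objects. -/
def eqHom (C : CatData.{u}) {a b : C.Obj} (h : a = b) : C.Hom a b := h ▸ C.id a

/-- Conjugation of a morphism by equalities of objects. -/
def conj (C : CatData.{u}) {a a' b b' : C.Obj} (h1 : a' = a) (h2 : b = b')
    (f : C.Hom a b) : C.Hom a' b' :=
  C.comp (C.eqHom h1) (C.comp f (C.eqHom h2))

@[simp] theorem eqHom_refl (C : CatData.{u}) (a : C.Obj) : C.eqHom (rfl : a = a) = C.id a := rfl

@[simp] theorem eqHom_trans (C : CatData.{u}) {a b c : C.Obj} (h : a = b) (h' : b = c) :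
    C.comp (C.eqHom h) (C.eqHom h') = C.eqHom (h.trans h') := by
  subst h; subst h'; exact C.id_comp _

@[simp] theorem conj_rfl (C : CatData.{u}) {a b : C.Obj} (f : C.Hom a b) :
    C.conj rfl rfl f = f := by
  show C.comp (C.id a) (C.comp f (C.id b)) = f
  rw [C.comp_id, C.id_comp]

theorem eqHom_conj (C : CatData.{u}) {a a' b b' : C.Obj} (h1 : a' = a) (h2 : b = b')
    (h : a = b) : C.conj h1 h2 (C.eqHom h) = C.eqHom ((h1.trans h).trans h2) := by
  subst h1; subst h2; subst h
  exact C.conj_rfl _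

end CatData

structure Fctr (C D : CatData.{u}) where
  obj : C.Obj → D.Obj
  map : {a b : C.Obj} → C.Hom a b → D.Hom (obj a) (obj b)
  map_id : ∀ a : C.Obj, map (C.id a) = D.id (obj a)
  map_comp : ∀ {a b c : C.Obj} (f : C.Hom a b) (g : C.Hom b c),
    map (C.comp f g) = D.comp (map f) (map g)

namespace Fctr

def idF (C : CatData.{u}) : Fctr C C where
  obj := fun a => a
  map := fun f => f
  map_id := fun _ => rfl
  map_comp := fun _ _ => rfl

def compF {C D E : CatData.{u}} (F : Fctr C D) (G : Fctr D E) : Fctr C E where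
  obj := fun a => G.obj (F.obj a)
  map := fun f => G.map (F.map f)
  map_id := fun a => by
    show G.map (F.map (C.id a)) = E.id (G.obj (F.obj a))
    rw [F.map_id, G.map_id]
  map_comp := fun f g => by
    show G.map (F.map (C.comp f g)) = E.comp (G.map (F.map f)) (G.map (F.map g))
    rw [F.map_comp, G.map_comp]

theorem map_eqHom {C D : CatData.{u}} (F : Fctr C D) {a b : C.Obj} (h : a = b) :
    F.map (C.eqHom h) = D.eqHom (congrArg F.obj h) := by
  subst h; simpa using F.map_id a

end Fctr

/-! Pseudo double categories.

A (pseudo) double category is given by a category `C0` of objects and vertical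
morphisms, a category `C1` of horizontal morphisms and 2-morphisms, source, target
and horizontal identity functors, a horizontal composition (given on objects of `C1`
for composable pairs, and on morphisms of `C1` for compatible pairs of 2-morphisms),
together with globular left/right identity and associativity isomorphisms. -/

structure DblCat : Type (u + 1) where
  C0 : CatData.{u}
  C1 : CatData.{u}
  s : Fctr C1 C0
  t : Fctr C1 C0
  i : Fctr C0 C1
  i_s_obj : ∀ a : C0.Obj, s.obj (i.obj a) = a
  i_t_obj : ∀ a : C0.Obj, t.obj (i.obj a) = a
  i_s_map : ∀ {a b : C0.Obj} (u : C0.Hom a b),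
    s.map (i.map u) = C0.conj (i_s_obj a) (i_s_obj b).symm u
  i_t_map : ∀ {a b : C0.Obj} (u : C0.Hom a b),
    t.map (i.map u) = C0.conj (i_t_obj a) (i_t_obj b).symm u
  hObj : (f g : C1.Obj) → t.obj f = s.obj g → C1.Obj
  hObj_s : ∀ (f g : C1.Obj) (w : t.obj f = s.obj g), s.obj (hObj f g w) = s.obj f
  hObj_t : ∀ (f g : C1.Obj) (w : t.obj f = s.obj g), t.obj (hObj f g w) = t.obj g
  hMap : {f f' g g' : C1.Obj} → (w : t.obj f = s.obj g) → (w' : t.obj f' = s.obj g') →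
    (Φ : C1.Hom f f') → (Ψ : C1.Hom g g') →
    C0.comp (t.map Φ) (C0.eqHom w') = C0.comp (C0.eqHom w) (s.map Ψ) →
    C1.Hom (hObj f g w) (hObj f' g' w')
  hMap_id : ∀ {f g : C1.Obj} (w : t.obj f = s.obj g) (pf : _),
    hMap w w (C1.id f) (C1.id g) pf = C1.id (hObj f g w)
  hMap_comp : ∀ {f f' f'' g g' g'' : C1.Obj}
    (w : t.obj f = s.obj g) (w' : t.obj f' = s.obj g') (w'' : t.obj f'' = s.obj g'')
    (Φ : C1.Hom f f') (Φ' : C1.Hom f' f'') (Ψ : C1.Hom g g') (Ψ' : C1.Hom g' g'')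
    (pf : _) (pf' : _) (pf'' : _),
    hMap w w'' (C1.comp Φ Φ') (C1.comp Ψ Ψ') pf'' =
      C1.comp (hMap w w' Φ Ψ pf) (hMap w' w'' Φ' Ψ' pf')
  hMap_s : ∀ {f f' g g' : C1.Obj} (w : t.obj f = s.obj g) (w' : t.obj f' = s.obj g')
    (Φ : C1.Hom f f') (Ψ : C1.Hom g g') (pf : _),
    s.map (hMap w w' Φ Ψ pf) = C0.conj (hObj_s f g w) (hObj_s f' g' w').symm (s.map Φ)
  hMap_t : ∀ {f f' g g' : C1.Obj} (w : t.obj f = s.obj g) (w' : t.obj f' = s.obj g')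
    (Φ : C1.Hom f f') (Ψ : C1.Hom g g') (pf : _),
    t.map (hMap w w' Φ Ψ pf) = C0.conj (hObj_t f g w) (hObj_t f' g' w').symm (t.map Ψ)
  lunit : (f : C1.Obj) → C1.Hom (hObj (i.obj (s.obj f)) f (i_t_obj (s.obj f))) f
  lunitInv : (f : C1.Obj) → C1.Hom f (hObj (i.obj (s.obj f)) f (i_t_obj (s.obj f)))
  lunit_iso₁ : ∀ f : C1.Obj, C1.comp (lunit f) (lunitInv f) = C1.id _
  lunit_iso₂ : ∀ f : C1.Obj, C1.comp (lunitInv f) (lunit f) = C1.id _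
  lunit_s : ∀ f : C1.Obj, ∃ h, s.map (lunit f) = C0.eqHom h
  lunit_t : ∀ f : C1.Obj, ∃ h, t.map (lunit f) = C0.eqHom h
  lunitInv_s : ∀ f : C1.Obj, ∃ h, s.map (lunitInv f) = C0.eqHom h
  lunitInv_t : ∀ f : C1.Obj, ∃ h, t.map (lunitInv f) = C0.eqHom h
  runit : (f : C1.Obj) → C1.Hom (hObj f (i.obj (t.obj f)) (i_s_obj (t.obj f)).symm) f
  runitInv : (f : C1.Obj) → C1.Hom f (hObj f (i.obj (t.obj f)) (i_s_obj (t.obj f)).symm)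
  runit_iso₁ : ∀ f : C1.Obj, C1.comp (runit f) (runitInv f) = C1.id _
  runit_iso₂ : ∀ f : C1.Obj, C1.comp (runitInv f) (runit f) = C1.id _
  runit_s : ∀ f : C1.Obj, ∃ h, s.map (runit f) = C0.eqHom h
  runit_t : ∀ f : C1.Obj, ∃ h, t.map (runit f) = C0.eqHom h
  runitInv_s : ∀ f : C1.Obj, ∃ h, s.map (runitInv f) = C0.eqHom h
  runitInv_t : ∀ f : C1.Obj, ∃ h, t.map (runitInv f) = C0.eqHom h
  assocC : {f g h : C1.Obj} → (w1 : t.obj f = s.obj g) → (w2 : t.obj g = s.obj h) →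
    C1.Hom (hObj (hObj f g w1) h ((hObj_t f g w1).trans w2))
      (hObj f (hObj g h w2) (w1.trans (hObj_s g h w2).symm))
  assocCInv : {f g h : C1.Obj} → (w1 : t.obj f = s.obj g) → (w2 : t.obj g = s.obj h) →
    C1.Hom (hObj f (hObj g h w2) (w1.trans (hObj_s g h w2).symm))
      (hObj (hObj f g w1) h ((hObj_t f g w1).trans w2))
  assoc_iso₁ : ∀ {f g h : C1.Obj} (w1 : t.obj f = s.obj g) (w2 : t.obj g = s.obj h),
    C1.comp (assocC w1 w2) (assocCInv w1 w2) = C1.id _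
  assoc_iso₂ : ∀ {f g h : C1.Obj} (w1 : t.obj f = s.obj g) (w2 : t.obj g = s.obj h),
    C1.comp (assocCInv w1 w2) (assocC w1 w2) = C1.id _
  assoc_s : ∀ {f g h : C1.Obj} (w1 : t.obj f = s.obj g) (w2 : t.obj g = s.obj h),
    ∃ hh, s.map (assocC w1 w2) = C0.eqHom hh
  assoc_t : ∀ {f g h : C1.Obj} (w1 : t.obj f = s.obj g) (w2 : t.obj g = s.obj h),
    ∃ hh, t.map (assocC w1 w2) = C0.eqHom hh
  assocInv_s : ∀ {f g h : C1.Obj} (w1 : t.obj f = s.obj g) (w2 : t.obj g = s.obj h),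
    ∃ hh, s.map (assocCInv w1 w2) = C0.eqHom hh
  assocInv_t : ∀ {f g h : C1.Obj} (w1 : t.obj f = s.obj g) (w2 : t.obj g = s.obj h),
    ∃ hh, t.map (assocCInv w1 w2) = C0.eqHom hh

namespace DblCat

/-- A 2-morphism is globular if its source and target are vertical identities. -/
def Globular (D : DblCat.{u}) {f g : D.C1.Obj} (Φ : D.C1.Hom f g) : Prop :=
  (∃ h, D.s.map Φ = D.C0.eqHom h) ∧ (∃ h, D.t.map Φ = D.C0.eqHom h)

/-- A 2-morphism is the horizontal identity of some vertical morphism. -/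
def IsHId (D : DblCat.{u}) {f g : D.C1.Obj} (Φ : D.C1.Hom f g) : Prop :=
  ∃ (a b : D.C0.Obj) (u : D.C0.Hom a b),
    f = D.i.obj a ∧ g = D.i.obj b ∧ HEq Φ (D.i.map u)

end DblCat

/-! Sub-double categories, globular generation, and the vertical/horizontal filtrations. -/

structure SubCat (C : CatData.{u}) where
  objs : Set C.Obj
  homs : ∀ ⦃a b : C.Obj⦄, C.Hom a b → Prop
  src_mem : ∀ {a b : C.Obj} {f : C.Hom a b}, homs f → a ∈ objs
  tgt_mem : ∀ {a b : C.Obj} {f : C.Hom a b}, homs f → b ∈ objs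
  id_mem : ∀ {a : C.Obj}, a ∈ objs → homs (C.id a)
  comp_mem : ∀ {a b c : C.Obj} {f : C.Hom a b} {g : C.Hom b c},
    homs f → homs g → homs (C.comp f g)

structure SubDbl (D : DblCat.{u}) where
  S0 : SubCat D.C0
  S1 : SubCat D.C1
  s_obj_mem : ∀ {f : D.C1.Obj}, f ∈ S1.objs → D.s.obj f ∈ S0.objs
  t_obj_mem : ∀ {f : D.C1.Obj}, f ∈ S1.objs → D.t.obj f ∈ S0.objs
  s_map_mem : ∀ {f g : D.C1.Obj} {Φ : D.C1.Hom f g}, S1.homs Φ → S0.homs (D.s.map Φ)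
  t_map_mem : ∀ {f g : D.C1.Obj} {Φ : D.C1.Hom f g}, S1.homs Φ → S0.homs (D.t.map Φ)
  i_obj_mem : ∀ {a : D.C0.Obj}, a ∈ S0.objs → D.i.obj a ∈ S1.objs
  i_map_mem : ∀ {a b : D.C0.Obj} {u : D.C0.Hom a b}, S0.homs u → S1.homs (D.i.map u)
  hObj_mem : ∀ {f g : D.C1.Obj} (w : D.t.obj f = D.s.obj g),
    f ∈ S1.objs → g ∈ S1.objs → D.hObj f g w ∈ S1.objs
  hMap_mem : ∀ {f f' g g' : D.C1.Obj} (w : D.t.obj f = D.s.obj g)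
    (w' : D.t.obj f' = D.s.obj g') (Φ : D.C1.Hom f f') (Ψ : D.C1.Hom g g') (pf : _),
    S1.homs Φ → S1.homs Ψ → S1.homs (D.hMap w w' Φ Ψ pf)
  lunit_mem : ∀ {f : D.C1.Obj}, f ∈ S1.objs → S1.homs (D.lunit f) ∧ S1.homs (D.lunitInv f)
  runit_mem : ∀ {f : D.C1.Obj}, f ∈ S1.objs → S1.homs (D.runit f) ∧ S1.homs (D.runitInv f)
  assoc_mem : ∀ {f g h : D.C1.Obj} (w1 : D.t.obj f = D.s.obj g) (w2 : D.t.obj g = D.s.obj h),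
    f ∈ S1.objs → g ∈ S1.objs → h ∈ S1.objs →
    S1.homs (D.assocC w1 w2) ∧ S1.homs (D.assocCInv w1 w2)

/-- A double category is globularily generated if the only sub-double category of it
containing all of its globular 2-morphisms is the double category itself. -/
def DblCat.GloballyGenerated (D : DblCat.{u}) : Prop :=
  ∀ S : SubDbl D,
    (∀ {f g : D.C1.Obj} (Φ : D.C1.Hom f g), D.Globular Φ → S.S1.homs Φ) →
    ((∀ a : D.C0.Obj, a ∈ S.S0.objs) ∧ (∀ {a b : D.C0.Obj} (u : D.C0.Hom a b), S.S0.homs u) ∧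
      (∀ f : D.C1.Obj, f ∈ S.S1.objs) ∧ (∀ {f g : D.C1.Obj} (Φ : D.C1.Hom f g), S.S1.homs Φ))

/-- The subcategory (closure) generated by a collection of morphisms. -/
inductive catClos (C : CatData.{u}) (S : ∀ ⦃a b : C.Obj⦄, C.Hom a b → Prop) :
    ∀ ⦃a b : C.Obj⦄, C.Hom a b → Prop
  | base {a b : C.Obj} {f : C.Hom a b} : S f → catClos C S f
  | id (a : C.Obj) : catClos C S (C.id a)
  | comp {a b c : C.Obj} {f : C.Hom a b} {g : C.Hom b c} :
      catClos C S f → catClos C S g → catClos C S (C.comp f g)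

/-- Closure of a collection of 2-morphisms under horizontal composition. -/
inductive horClos (D : DblCat.{u}) (S : ∀ ⦃f g : D.C1.Obj⦄, D.C1.Hom f g → Prop) :
    ∀ ⦃f g : D.C1.Obj⦄, D.C1.Hom f g → Prop
  | base {f g : D.C1.Obj} {Φ : D.C1.Hom f g} : S Φ → horClos D S Φ
  | hcomp {f f' g g' : D.C1.Obj} (w : D.t.obj f = D.s.obj g) (w' : D.t.obj f' = D.s.obj g')
      (Φ : D.C1.Hom f f') (Ψ : D.C1.Hom g g') (pf : _) :
      horClos D S Φ → horClos D S Ψ → horClos D S (D.hMap w w' Φ Ψ pf)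

/-- The horizontal filtration of a double category: `Hfil D k` is the collection
`H_{k+1}` of the paper; `Hfil D 0 = H₁` is the union of the globular 2-morphisms and
the horizontal identities of vertical morphisms, and `H_{k+1}` consists of the
horizontal composites of 2-morphisms of `V_k`. -/
def DblCat.Hfil (D : DblCat.{u}) : ℕ → ∀ ⦃f g : D.C1.Obj⦄, D.C1.Hom f g → Prop
  | 0 => fun _ _ Φ => D.Globular Φ ∨ D.IsHId Φ
  | k + 1 => horClos D (catClos D.C1 (D.Hfil k))

/-- The vertical filtration of a double category: `Vfil D k` is the collection of
morphisms of the subcategory `V_{k+1}` of `C1` generated by `H_{k+1}`. -/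
def DblCat.Vfil (D : DblCat.{u}) (k : ℕ) : ∀ ⦃f g : D.C1.Obj⦄, D.C1.Hom f g → Prop :=
  catClos D.C1 (D.Hfil k)

/-- Strictness of a double category: horizontal composition is strictly unital and
associative and the unitors and associator are identities. -/
structure DblCat.IsStrict (D : DblCat.{u}) : Prop where
  hObj_idl : ∀ f : D.C1.Obj, D.hObj (D.i.obj (D.s.obj f)) f (D.i_t_obj (D.s.obj f)) = f
  hObj_idr : ∀ f : D.C1.Obj, D.hObj f (D.i.obj (D.t.obj f)) (D.i_s_obj (D.t.obj f)).symm = f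
  hObj_assoc : ∀ {f g h : D.C1.Obj} (w1 : D.t.obj f = D.s.obj g) (w2 : D.t.obj g = D.s.obj h),
    D.hObj (D.hObj f g w1) h ((D.hObj_t f g w1).trans w2) =
      D.hObj f (D.hObj g h w2) (w1.trans ((D.hObj_s g h w2)).symm)
  lunit_eq : ∀ f : D.C1.Obj, D.lunit f = D.C1.eqHom (hObj_idl f)
  runit_eq : ∀ f : D.C1.Obj, D.runit f = D.C1.eqHom (hObj_idr f)
  assoc_eq : ∀ {f g h : D.C1.Obj} (w1 : D.t.obj f = D.s.obj g) (w2 : D.t.obj g = D.s.obj h),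
    D.assocC w1 w2 = D.C1.eqHom (hObj_assoc w1 w2)

/-! Double functors. -/

structure DblFctr (C D : DblCat.{u}) where
  F0 : Fctr C.C0 D.C0
  F1 : Fctr C.C1 D.C1
  s_obj : ∀ f : C.C1.Obj, D.s.obj (F1.obj f) = F0.obj (C.s.obj f)
  t_obj : ∀ f : C.C1.Obj, D.t.obj (F1.obj f) = F0.obj (C.t.obj f)
  s_map : ∀ {f g : C.C1.Obj} (Φ : C.C1.Hom f g),
    D.s.map (F1.map Φ) = D.C0.conj (s_obj f) (s_obj g).symm (F0.map (C.s.map Φ))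
  t_map : ∀ {f g : C.C1.Obj} (Φ : C.C1.Hom f g),
    D.t.map (F1.map Φ) = D.C0.conj (t_obj f) (t_obj g).symm (F0.map (C.t.map Φ))
  i_obj : ∀ a : C.C0.Obj, F1.obj (C.i.obj a) = D.i.obj (F0.obj a)
  i_map : ∀ {a b : C.C0.Obj} (u : C.C0.Hom a b),
    F1.map (C.i.map u) = D.C1.conj (i_obj a) (i_obj b).symm (D.i.map (F0.map u))
  hObj_comm : ∀ (f g : C.C1.Obj) (w : C.t.obj f = C.s.obj g),
    F1.obj (C.hObj f g w) =
      D.hObj (F1.obj f) (F1.obj g)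
        ((t_obj f).trans ((congrArg F0.obj w).trans (s_obj g).symm))
  hMap_comm : ∀ {f f' g g' : C.C1.Obj} (w : C.t.obj f = C.s.obj g)
    (w' : C.t.obj f' = C.s.obj g') (Φ : C.C1.Hom f f') (Ψ : C.C1.Hom g g')
    (pf : _) (pf' : _),
    F1.map (C.hMap w w' Φ Ψ pf) =
      D.C1.conj (hObj_comm f g w) (hObj_comm f' g' w').symm
        (D.hMap _ _ (F1.map Φ) (F1.map Ψ) pf')
  lunit_comm : ∀ f : C.C1.Obj, HEq (F1.map (C.lunit f)) (D.lunit (F1.obj f))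
  runit_comm : ∀ f : C.C1.Obj, HEq (F1.map (C.runit f)) (D.runit (F1.obj f))
  assoc_comm : ∀ {f g h : C.C1.Obj} (w1 : C.t.obj f = C.s.obj g)
    (w2 : C.t.obj g = C.s.obj h),
    HEq (F1.map (C.assocC w1 w2))
      (D.assocC ((t_obj f).trans ((congrArg F0.obj w1).trans (s_obj g).symm))
        ((t_obj g).trans ((congrArg F0.obj w2).trans (s_obj h).symm)))

/-! Auxiliary lemmas for stmt1. -/

namespace CatData

theorem comp_conj_eqHom (C : CatData.{u}) {a a' b b' c : C.Obj} (h1 : a' = a) (h2 : b = b')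
    (f : C.Hom a b) (h3 : b' = c) :
    C.comp (C.conj h1 h2 f) (C.eqHom h3) = C.conj h1 (h2.trans h3) f := by
  subst h1; subst h2; subst h3
  show C.comp (C.conj rfl rfl f) (C.eqHom rfl) = C.conj rfl rfl f
  rw [C.conj_rfl, C.eqHom_refl, C.comp_id]

theorem eqHom_comp_conj (C : CatData.{u}) {a0 a a' b b' : C.Obj} (h0 : a0 = a') (h1 : a' = a)
    (h2 : b = b') (f : C.Hom a b) :
    C.comp (C.eqHom h0) (C.conj h1 h2 f) = C.conj (h0.trans h1) h2 f := by
  subst h0; subst h1; subst h2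
  show C.comp (C.eqHom rfl) (C.conj rfl rfl f) = C.conj rfl rfl f
  rw [C.conj_rfl, C.eqHom_refl, C.id_comp]

theorem conj_cancel (C : CatData.{u}) {a a' b b' : C.Obj} {h1 : a' = a} {h2 : b = b'}
    {f g : C.Hom a b} (h : C.conj h1 h2 f = C.conj h1 h2 g) : f = g := by
  subst h1; subst h2
  rwa [C.conj_rfl, C.conj_rfl] at h

theorem conj_eq_eqHom (C : CatData.{u}) {a a' b b' : C.Obj} (h1 : a' = a) (h2 : b = b')
    (f : C.Hom a b) (E : a' = b') (h : C.conj h1 h2 f = C.eqHom E) :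
    ∃ e : a = b, f = C.eqHom e := by
  subst h1; subst h2
  exact ⟨E, by rwa [C.conj_rfl] at h⟩

theorem heq_id (C : CatData.{u}) {a b : C.Obj} (h : a = b) : HEq (C.id a) (C.id b) := by
  subst h; rfl

theorem heq_comp (C : CatData.{u}) {a a' b b' c c' : C.Obj}
    (ha : a = a') (hb : b = b') (hc : c = c')
    {f : C.Hom a b} {f' : C.Hom a' b'} {g : C.Hom b c} {g' : C.Hom b' c'}
    (hf : HEq f f') (hg : HEq g g') : HEq (C.comp f g) (C.comp f' g') := by
  subst ha; subst hb; subst hc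
  rw [eq_of_heq hf, eq_of_heq hg]

end CatData

namespace DblCat

theorem hObj_congr (D : DblCat.{u}) {f f' g g' : D.C1.Obj} (hf : f = f') (hg : g = g')
    (w : D.t.obj f = D.s.obj g) (w' : D.t.obj f' = D.s.obj g') :
    D.hObj f g w = D.hObj f' g' w' := by
  subst hf; subst hg; rfl

theorem hMap_congr (D : DblCat.{u}) {f f' g g' : D.C1.Obj}
    (w : D.t.obj f = D.s.obj g) (w' : D.t.obj f' = D.s.obj g')
    {Φ Φ' : D.C1.Hom f f'} {Ψ Ψ' : D.C1.Hom g g'} (hΦ : Φ = Φ') (hΨ : Ψ = Ψ')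
    (pf : _) (pf' : _) :
    D.hMap w w' Φ Ψ pf = D.hMap w w' Φ' Ψ' pf' := by
  subst hΦ; subst hΨ; rfl

theorem hObj_ii (D : DblCat.{u}) (hs : D.IsStrict) (a : D.C0.Obj)
    (w : D.t.obj (D.i.obj a) = D.s.obj (D.i.obj a)) :
    D.hObj (D.i.obj a) (D.i.obj a) w = D.i.obj a := by
  refine Eq.trans ?_ (hs.hObj_idl (D.i.obj a))
  exact hObj_congr D (congrArg D.i.obj (D.i_s_obj a)).symm rfl w _

theorem diag_of_pf (D : DblCat.{u}) {a b : D.C0.Obj} (u v : D.C0.Hom a b)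
    (w : D.t.obj (D.i.obj a) = D.s.obj (D.i.obj a))
    (w' : D.t.obj (D.i.obj b) = D.s.obj (D.i.obj b))
    (pf : D.C0.comp (D.t.map (D.i.map u)) (D.C0.eqHom w') =
          D.C0.comp (D.C0.eqHom w) (D.s.map (D.i.map v))) : u = v := by
  rw [D.i_t_map, D.i_s_map, D.C0.comp_conj_eqHom, D.C0.eqHom_comp_conj] at pf
  exact D.C0.conj_cancel pf

/-- The key "unit naturality" property of a vertical morphism. -/
def UnitDiag (D : DblCat.{u}) {a b : D.C0.Obj} (u : D.C0.Hom a b) : Prop :=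
  ∀ (w : D.t.obj (D.i.obj a) = D.s.obj (D.i.obj a))
    (w' : D.t.obj (D.i.obj b) = D.s.obj (D.i.obj b))
    (pf : D.C0.comp (D.t.map (D.i.map u)) (D.C0.eqHom w') =
          D.C0.comp (D.C0.eqHom w) (D.s.map (D.i.map u))),
    HEq (D.hMap w w' (D.i.map u) (D.i.map u) pf) (D.i.map u)

theorem unitDiag_id (D : DblCat.{u}) (hs : D.IsStrict) (a : D.C0.Obj) :
    D.UnitDiag (D.C0.id a) := by
  intro w w' pf
  have h1 : D.i.map (D.C0.id a) = D.C1.id (D.i.obj a) := D.i.map_id a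
  have pf2 : D.C0.comp (D.t.map (D.C1.id (D.i.obj a))) (D.C0.eqHom w') =
      D.C0.comp (D.C0.eqHom w) (D.s.map (D.C1.id (D.i.obj a))) := by
    rw [D.t.map_id, D.s.map_id, D.C0.comp_id, D.C0.id_comp]
  have h2 : D.hMap w w' (D.i.map (D.C0.id a)) (D.i.map (D.C0.id a)) pf
      = D.C1.id (D.hObj (D.i.obj a) (D.i.obj a) w) :=
    (D.hMap_congr w w' h1 h1 pf pf2).trans (D.hMap_id w pf2)
  rw [h2, h1]
  exact D.C1.heq_id (D.hObj_ii hs a w)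

theorem unitDiag_comp (D : DblCat.{u}) (hs : D.IsStrict) {a b c : D.C0.Obj}
    {u : D.C0.Hom a b} {v : D.C0.Hom b c}
    (hu : D.UnitDiag u) (hv : D.UnitDiag v) : D.UnitDiag (D.C0.comp u v) := by
  intro w w'' pf
  have w' : D.t.obj (D.i.obj b) = D.s.obj (D.i.obj b) :=
    (D.i_t_obj b).trans (D.i_s_obj b).symm
  have pfu : D.C0.comp (D.t.map (D.i.map u)) (D.C0.eqHom w') =
      D.C0.comp (D.C0.eqHom w) (D.s.map (D.i.map u)) := by
    rw [D.i_t_map, D.i_s_map, D.C0.comp_conj_eqHom, D.C0.eqHom_comp_conj]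
  have pfv : D.C0.comp (D.t.map (D.i.map v)) (D.C0.eqHom w'') =
      D.C0.comp (D.C0.eqHom w') (D.s.map (D.i.map v)) := by
    rw [D.i_t_map, D.i_s_map, D.C0.comp_conj_eqHom, D.C0.eqHom_comp_conj]
  have hcomp : D.i.map (D.C0.comp u v) = D.C1.comp (D.i.map u) (D.i.map v) :=
    D.i.map_comp u v
  have pf2 : D.C0.comp (D.t.map (D.C1.comp (D.i.map u) (D.i.map v))) (D.C0.eqHom w'') =
      D.C0.comp (D.C0.eqHom w) (D.s.map (D.C1.comp (D.i.map u) (D.i.map v))) := by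
    rw [← hcomp]; exact pf
  have step : D.hMap w w'' (D.i.map (D.C0.comp u v)) (D.i.map (D.C0.comp u v)) pf
      = D.C1.comp (D.hMap w w' (D.i.map u) (D.i.map u) pfu)
          (D.hMap w' w'' (D.i.map v) (D.i.map v) pfv) :=
    (D.hMap_congr w w'' hcomp hcomp pf pf2).trans
      (D.hMap_comp w w' w'' (D.i.map u) (D.i.map v) (D.i.map u) (D.i.map v) pfu pfv pf2)
  rw [step, hcomp]
  exact D.C1.heq_comp (D.hObj_ii hs a w) (D.hObj_ii hs b w') (D.hObj_ii hs c w'')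
    (hu w w' pfu) (hv w' w'' pfv)

theorem unitDiag_eqHom (D : DblCat.{u}) (hs : D.IsStrict) {a b : D.C0.Obj} (h : a = b) :
    D.UnitDiag (D.C0.eqHom h) := by
  subst h; exact D.unitDiag_id hs a

theorem unitDiag_conj (D : DblCat.{u}) (hs : D.IsStrict) {a a' b b' : D.C0.Obj}
    (h1 : a' = a) (h2 : b = b') {u : D.C0.Hom a b} (hu : D.UnitDiag u) :
    D.UnitDiag (D.C0.conj h1 h2 u) :=
  D.unitDiag_comp hs (D.unitDiag_eqHom hs h1) (D.unitDiag_comp hs hu (D.unitDiag_eqHom hs h2))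

theorem unitDiag_all (D : DblCat.{u}) (hs : D.IsStrict) (hD : D.GloballyGenerated)
    {a b : D.C0.Obj} (u : D.C0.Hom a b) : D.UnitDiag u := by
  have globH : ∀ {f g : D.C1.Obj} (Φ : D.C1.Hom f g), D.Globular Φ →
      D.UnitDiag (D.s.map Φ) ∧ D.UnitDiag (D.t.map Φ) := by
    rintro f g Φ ⟨⟨h1, e1⟩, ⟨h2, e2⟩⟩
    exact ⟨by rw [e1]; exact D.unitDiag_eqHom hs h1,
           by rw [e2]; exact D.unitDiag_eqHom hs h2⟩
  let S : SubDbl D :=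
  { S0 :=
    { objs := Set.univ
      homs := fun {a b} u => D.UnitDiag u
      src_mem := fun _ => trivial
      tgt_mem := fun _ => trivial
      id_mem := fun _ => D.unitDiag_id hs _
      comp_mem := fun hf hg => D.unitDiag_comp hs hf hg }
    S1 :=
    { objs := Set.univ
      homs := fun {f g} Φ => D.UnitDiag (D.s.map Φ) ∧ D.UnitDiag (D.t.map Φ)
      src_mem := fun _ => trivial
      tgt_mem := fun _ => trivial
      id_mem := fun _ => ⟨by rw [D.s.map_id]; exact D.unitDiag_id hs _,
                          by rw [D.t.map_id]; exact D.unitDiag_id hs _⟩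
      comp_mem := fun hf hg =>
        ⟨by rw [D.s.map_comp]; exact D.unitDiag_comp hs hf.1 hg.1,
         by rw [D.t.map_comp]; exact D.unitDiag_comp hs hf.2 hg.2⟩ }
    s_obj_mem := fun _ => trivial
    t_obj_mem := fun _ => trivial
    s_map_mem := fun h => h.1
    t_map_mem := fun h => h.2
    i_obj_mem := fun _ => trivial
    i_map_mem := fun hu =>
      ⟨by rw [D.i_s_map]; exact D.unitDiag_conj hs _ _ hu,
       by rw [D.i_t_map]; exact D.unitDiag_conj hs _ _ hu⟩
    hObj_mem := fun _ _ _ => trivial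
    hMap_mem := fun w w' Φ Ψ pf hΦ hΨ =>
      ⟨by rw [D.hMap_s]; exact D.unitDiag_conj hs _ _ hΦ.1,
       by rw [D.hMap_t]; exact D.unitDiag_conj hs _ _ hΨ.2⟩
    lunit_mem := fun {f} _ =>
      ⟨globH _ ⟨D.lunit_s f, D.lunit_t f⟩, globH _ ⟨D.lunitInv_s f, D.lunitInv_t f⟩⟩
    runit_mem := fun {f} _ =>
      ⟨globH _ ⟨D.runit_s f, D.runit_t f⟩, globH _ ⟨D.runitInv_s f, D.runitInv_t f⟩⟩
    assoc_mem := fun w1 w2 _ _ _ =>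
      ⟨globH _ ⟨D.assoc_s w1 w2, D.assoc_t w1 w2⟩,
       globH _ ⟨D.assocInv_s w1 w2, D.assocInv_t w1 w2⟩⟩ }
  exact (hD S globH).2.1 u

theorem hfil_succ (D : DblCat.{u}) {k : ℕ} {f g : D.C1.Obj} {Φ : D.C1.Hom f g}
    (h : D.Hfil k Φ) : D.Hfil (k + 1) Φ :=
  horClos.base (catClos.base h)

theorem hfil_mono (D : DblCat.{u}) {k k' : ℕ} (hk : k ≤ k') {f g : D.C1.Obj}
    {Φ : D.C1.Hom f g} (h : D.Hfil k Φ) : D.Hfil k' Φ := by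
  induction hk with
  | refl => exact h
  | step _ ih => exact D.hfil_succ ih

theorem hMap_s_eqHom (D : DblCat.{u}) {f f' g g' : D.C1.Obj}
    (w : D.t.obj f = D.s.obj g) (w' : D.t.obj f' = D.s.obj g')
    (Φ : D.C1.Hom f f') (Ψ : D.C1.Hom g g') (pf : _)
    (hΦ : ∃ h, D.s.map Φ = D.C0.eqHom h) :
    ∃ h, D.s.map (D.hMap w w' Φ Ψ pf) = D.C0.eqHom h := by
  obtain ⟨h1, e1⟩ := hΦ
  refine ⟨(D.hObj_s f g w).trans (h1.trans (D.hObj_s f' g' w').symm), ?_⟩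
  rw [D.hMap_s, e1]
  exact D.C0.eqHom_conj _ _ _

theorem hMap_t_eqHom (D : DblCat.{u}) {f f' g g' : D.C1.Obj}
    (w : D.t.obj f = D.s.obj g) (w' : D.t.obj f' = D.s.obj g')
    (Φ : D.C1.Hom f f') (Ψ : D.C1.Hom g g') (pf : _)
    (hΨ : ∃ h, D.t.map Ψ = D.C0.eqHom h) :
    ∃ h, D.t.map (D.hMap w w' Φ Ψ pf) = D.C0.eqHom h := by
  obtain ⟨h2, e2⟩ := hΨ
  refine ⟨(D.hObj_t f g w).trans (h2.trans (D.hObj_t f' g' w').symm), ?_⟩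
  rw [D.hMap_t, e2]
  exact D.C0.eqHom_conj _ _ _

theorem hfil0_closed (D : DblCat.{u}) (hs : D.IsStrict) (hD : D.GloballyGenerated)
    {f f' g g' : D.C1.Obj} (w : D.t.obj f = D.s.obj g) (w' : D.t.obj f' = D.s.obj g')
    (Φ : D.C1.Hom f f') (Ψ : D.C1.Hom g g') (pf : _)
    (hΦ : D.Hfil 0 Φ) (hΨ : D.Hfil 0 Ψ) : D.Hfil 0 (D.hMap w w' Φ Ψ pf) := by
  rcases hΦ with hΦ | hΦ
  · rcases hΨ with hΨ | hΨ
    · -- glob, glob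
      exact Or.inl ⟨D.hMap_s_eqHom w w' Φ Ψ pf hΦ.1, D.hMap_t_eqHom w w' Φ Ψ pf hΨ.2⟩
    · -- glob, hId
      obtain ⟨a2, b2, v, hg, hg', hheq⟩ := hΨ
      subst hg; subst hg'
      have hΨv : Ψ = D.i.map v := eq_of_heq hheq
      subst hΨv
      obtain ⟨⟨h1, e1⟩, ⟨h2, e2⟩⟩ := hΦ
      rw [e2, D.i_s_map, D.C0.eqHom_comp_conj, D.C0.eqHom_trans] at pf
      obtain ⟨e, hv⟩ := D.C0.conj_eq_eqHom _ _ _ _ pf.symm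
      have ht : ∃ h, D.t.map (D.i.map v) = D.C0.eqHom h := by
        rw [hv, Fctr.map_eqHom D.i, Fctr.map_eqHom D.t]
        exact ⟨_, rfl⟩
      exact Or.inl ⟨D.hMap_s_eqHom w w' Φ _ _ ⟨h1, e1⟩, D.hMap_t_eqHom w w' Φ _ _ ht⟩
  · rcases hΨ with hΨ | hΨ
    · -- hId, glob
      obtain ⟨a1, b1, u, hf, hf', hheq⟩ := hΦ
      subst hf; subst hf'
      have hΦu : Φ = D.i.map u := eq_of_heq hheq
      subst hΦu
      obtain ⟨⟨h1, e1⟩, ⟨h2, e2⟩⟩ := hΨ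
      rw [e1, D.i_t_map, D.C0.comp_conj_eqHom, D.C0.eqHom_trans] at pf
      obtain ⟨e, hu⟩ := D.C0.conj_eq_eqHom _ _ _ _ pf
      have hsrc : ∃ h, D.s.map (D.i.map u) = D.C0.eqHom h := by
        rw [hu, Fctr.map_eqHom D.i, Fctr.map_eqHom D.s]
        exact ⟨_, rfl⟩
      exact Or.inl ⟨D.hMap_s_eqHom w w' _ Ψ _ hsrc, D.hMap_t_eqHom w w' _ Ψ _ ⟨h2, e2⟩⟩
    · -- hId, hId
      obtain ⟨a1, b1, u, hf, hf', hheqΦ⟩ := hΦ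
      obtain ⟨a2, b2, v, hg, hg', hheqΨ⟩ := hΨ
      subst hf; subst hf'; subst hg; subst hg'
      have hΦu : Φ = D.i.map u := eq_of_heq hheqΦ
      have hΨv : Ψ = D.i.map v := eq_of_heq hheqΨ
      subst hΦu; subst hΨv
      have ha : a1 = a2 := (D.i_t_obj a1).symm.trans (w.trans (D.i_s_obj a2))
      have hb : b1 = b2 := (D.i_t_obj b1).symm.trans (w'.trans (D.i_s_obj b2))
      subst ha; subst hb
      have huv : u = v := D.diag_of_pf u v w w' pf
      subst huv
      exact Or.inr ⟨a1, b1, u, D.hObj_ii hs a1 w, D.hObj_ii hs b1 w',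
        D.unitDiag_all hs hD u w w' pf⟩

end DblCat


/-- if `D` is a strict globularily generated double category then its
transversal category `τD` (objects: vertical morphisms; morphisms: all 2-morphisms of
`D`; composition: horizontal composition) is the colimit (increasing union) of its
horizontal filtration: every 2-morphism of `D` lies in some term `H_k` of the
horizontal filtration, and each `H_k` is a category with objects the vertical
morphisms of `D`, i.e. it contains the horizontal identity of every vertical morphism
(the identities of `τD`) and is closed under horizontal composition (the composition
of `τD`). -/
theorem stmt1 (D : DblCat.{u}) (hstrict : D.IsStrict) (hD : D.GloballyGenerated) :
    (∀ {f g : D.C1.Obj} (Φ : D.C1.Hom f g), ∃ k : ℕ, D.Hfil k Φ) ∧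
    (∀ (k : ℕ) {a b : D.C0.Obj} (u : D.C0.Hom a b), D.Hfil k (D.i.map u)) ∧
    (∀ (k : ℕ) {f f' g g' : D.C1.Obj} (w : D.t.obj f = D.s.obj g)
        (w' : D.t.obj f' = D.s.obj g') (Φ : D.C1.Hom f f') (Ψ : D.C1.Hom g g') (pf : _),
        D.Hfil k Φ → D.Hfil k Ψ → D.Hfil k (D.hMap w w' Φ Ψ pf)) := by
  
  refine ⟨?_, ?_, ?_⟩
  · -- every 2-morphism lies in some H_k
    let T : SubDbl D :=
    { S0 :=
      { objs := Set.univ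
        homs := fun {a b} _ => True
        src_mem := fun _ => trivial
        tgt_mem := fun _ => trivial
        id_mem := fun _ => trivial
        comp_mem := fun _ _ => trivial }
      S1 :=
      { objs := Set.univ
        homs := fun {f g} Φ => ∃ k, D.Hfil k Φ
        src_mem := fun _ => trivial
        tgt_mem := fun _ => trivial
        id_mem := fun _ => ⟨1, horClos.base (catClos.id _)⟩
        comp_mem := fun {a b c} {Φ Ψ} hΦ hΨ => by
          obtain ⟨k, h⟩ := hΦ
          obtain ⟨k', h'⟩ := hΨ
          exact ⟨max k k' + 1, horClos.base (catClos.comp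
            (catClos.base (D.hfil_mono (le_max_left k k') h))
            (catClos.base (D.hfil_mono (le_max_right k k') h')))⟩ }
      s_obj_mem := fun _ => trivial
      t_obj_mem := fun _ => trivial
      s_map_mem := fun _ => trivial
      t_map_mem := fun _ => trivial
      i_obj_mem := fun _ => trivial
      i_map_mem := fun {a b} {u} _ => ⟨0, Or.inr ⟨a, b, u, rfl, rfl, HEq.rfl⟩⟩
      hObj_mem := fun _ _ _ => trivial
      hMap_mem := fun w w' Φ Ψ pf hΦ hΨ => by
        obtain ⟨k, h⟩ := hΦ
        obtain ⟨k', h'⟩ := hΨ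
        exact ⟨max k k' + 1, horClos.hcomp w w' Φ Ψ pf
          (horClos.base (catClos.base (D.hfil_mono (le_max_left k k') h)))
          (horClos.base (catClos.base (D.hfil_mono (le_max_right k k') h')))⟩
      lunit_mem := fun {f} _ =>
        ⟨⟨0, Or.inl ⟨D.lunit_s f, D.lunit_t f⟩⟩,
         ⟨0, Or.inl ⟨D.lunitInv_s f, D.lunitInv_t f⟩⟩⟩
      runit_mem := fun {f} _ =>
        ⟨⟨0, Or.inl ⟨D.runit_s f, D.runit_t f⟩⟩,
         ⟨0, Or.inl ⟨D.runitInv_s f, D.runitInv_t f⟩⟩⟩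
      assoc_mem := fun w1 w2 _ _ _ =>
        ⟨⟨0, Or.inl ⟨D.assoc_s w1 w2, D.assoc_t w1 w2⟩⟩,
         ⟨0, Or.inl ⟨D.assocInv_s w1 w2, D.assocInv_t w1 w2⟩⟩⟩ }
    intro f g Φ
    exact (hD T (fun Φ h => ⟨0, Or.inl h⟩)).2.2.2 Φ
  · -- horizontal identities lie in every H_k
    intro k a b u
    induction k with
    | zero => exact Or.inr ⟨a, b, u, rfl, rfl, HEq.rfl⟩
    | succ k ih => exact D.hfil_succ ih
  · -- each H_k is closed under horizontal composition
    intro k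
    induction k with
    | zero =>
      intro f f' g g' w w' Φ Ψ pf hΦ hΨ
      exact D.hfil0_closed hstrict hD w w' Φ Ψ pf hΦ hΨ
    | succ k ih =>
      intro f f' g g' w w' Φ Ψ pf hΦ hΨ
      exact horClos.hcomp w w' Φ Ψ pf hΦ hΨ
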